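/- Let S be a symmetric positive definite n×n matrix. Then on each face of the standard simplex (the set of probability vectors with a prescribed support), there is at most one point X with full prescribed support satisfying the fixed-point condition: X(i) > 0 implies (SX)_i = X · SX for all i. Consequently, the set of fixed points of (S,S) in the standard simplex is finite. -/

import Mathlib

open Matrix in


theorem stmt8 (n : ℕ) (S : Matrix (Fin n) (Fin n) ℝ)
    (hsym : S.IsSymm) (hpd : S.PosDef) :
    (∀ supp : Finset (Fin n), ∀ X Y : Fin n → ℝ,
        (∀ i, 0 ≤ X i) → (∑ i, X i = 1) →
        (∀ i, 0 ≤ Y i) → (∑ i, Y i = 1) →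
        (∀ i, 0 < X i ↔ i ∈ supp) → (∀ i, 0 < Y i ↔ i ∈ supp) →
        (∀ i, 0 < X i → S.mulVec X i = ∑ j, X j * S.mulVec X j) →
        (∀ i, 0 < Y i → S.mulVec Y i = ∑ j, Y j * S.mulVec Y j) →
        X = Y) ∧
    {X : Fin n → ℝ | (∀ i, 0 ≤ X i) ∧ (∑ i, X i = 1) ∧
        (∀ i, 0 < X i → S.mulVec X i = ∑ j, X j * S.mulVec X j)}.Finite := by
  have huniq : ∀ supp : Finset (Fin n), ∀ X Y : Fin n → ℝ,
      (∀ i, 0 ≤ X i) → (∑ i, X i = 1) →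
      (∀ i, 0 ≤ Y i) → (∑ i, Y i = 1) →
      (∀ i, 0 < X i ↔ i ∈ supp) → (∀ i, 0 < Y i ↔ i ∈ supp) →
      (∀ i, 0 < X i → S.mulVec X i = ∑ j, X j * S.mulVec X j) →
      (∀ i, 0 < Y i → S.mulVec Y i = ∑ j, Y j * S.mulVec Y j) →
      X = Y := by
    intro supp X Y hX0 hX1 hY0 hY1 hXs hYs hXf hYf
    set c := ∑ j, X j * S.mulVec X j with hc
    set d := ∑ j, Y j * S.mulVec Y j with hd
    have key : ∀ (W : Fin n → ℝ) (e : ℝ), (∀ i, 0 ≤ W i) → (∑ i, W i = 1) →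
        ∀ V : Fin n → ℝ, (∀ i, 0 < W i → V i = e) → W ⬝ᵥ V = e := by
      intro W e hW0 hW1 V hV
      have h1 : ∀ i, W i * V i = W i * e := by
        intro i
        rcases (hW0 i).lt_or_eq with h | h
        · rw [hV i h]
        · rw [← h]; ring
      calc W ⬝ᵥ V = ∑ i, W i * V i := rfl
        _ = ∑ i, W i * e := by simp only [h1]
        _ = (∑ i, W i) * e := by rw [Finset.sum_mul]
        _ = e := by rw [hW1, one_mul]
    have hXSX : X ⬝ᵥ S.mulVec X = c := key X c hX0 hX1 _ hXf
    have hYSY : Y ⬝ᵥ S.mulVec Y = d := key Y d hY0 hY1 _ hYf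
    have hXSY : X ⬝ᵥ S.mulVec Y = d :=
      key X d hX0 hX1 _ (fun i hi => hYf i ((hYs i).2 ((hXs i).1 hi)))
    have hYSX : Y ⬝ᵥ S.mulVec X = c :=
      key Y c hY0 hY1 _ (fun i hi => hXf i ((hXs i).2 ((hYs i).1 hi)))
    have hq : (X - Y) ⬝ᵥ S.mulVec (X - Y) = 0 := by
      rw [Matrix.mulVec_sub, dotProduct_sub, sub_dotProduct,
        sub_dotProduct, hXSX, hYSY, hXSY, hYSX]
      ring
    by_contra hne
    have hz : X - Y ≠ 0 := sub_ne_zero.mpr hne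
    have hpos := hpd.dotProduct_mulVec_pos hz
    simp only [star_trivial, RCLike.re_to_real, hq] at hpos
    exact lt_irrefl 0 hpos
  refine ⟨huniq, ?_⟩
  have hinj : Set.InjOn (fun X : Fin n → ℝ => Finset.filter (fun i => 0 < X i) Finset.univ)
      {X : Fin n → ℝ | (∀ i, 0 ≤ X i) ∧ (∑ i, X i = 1) ∧
        (∀ i, 0 < X i → S.mulVec X i = ∑ j, X j * S.mulVec X j)} := by
    intro X hX Y hY hXY
    have hXY' : Finset.filter (fun i => 0 < X i) Finset.univ
        = Finset.filter (fun i => 0 < Y i) Finset.univ := hXY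
    obtain ⟨hX0, hX1, hXf⟩ := hX
    obtain ⟨hY0, hY1, hYf⟩ := hY
    refine huniq (Finset.filter (fun i => 0 < X i) Finset.univ) X Y hX0 hX1 hY0 hY1
      (fun i => by simp) (fun i => ?_) hXf hYf
    rw [hXY']; simp
  exact Set.Finite.of_finite_image (Set.toFinite _) hinj
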